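/- Let φ : ℝ^{d₁×d₂} → ℝ be twice continuously differentiable, let k ≥ 1 be an integer, and suppose L ≥ μ ≥ 0 are constants such that μ‖E‖_F² ≤ ∇²φ(M)[E,E] ≤ L‖E‖_F² for all M, E ∈ ℝ^{d₁×d₂} with rank(M) ≤ k and rank(E) ≤ k. Then for all M₁, M₂, E ∈ ℝ^{d₁×d₂} such that rank(a·M₁ + b·M₂ + c·E) ≤ k for every a, b, c ∈ ℝ, one has |⟨∇φ(M₂) − ∇φ(M₁), E⟩ − ((L+μ)/2)·⟨M₂ − M₁, E⟩| ≤ ((L−μ)/2)·‖M₂ − M₁‖_F·‖E‖_F. -/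

import Mathlib

noncomputable section

open Matrix

attribute [local instance] Matrix.normedAddCommGroup Matrix.normedSpace

/-- Euclidean norm on `ℝⁿ`. -/
def enorm {n : ℕ} (x : Fin n → ℝ) : ℝ := Real.sqrt (∑ i, x i ^ 2)

/-- Frobenius norm of a real matrix. -/
def frob {m n : ℕ} (A : Matrix (Fin m) (Fin n) ℝ) : ℝ := Real.sqrt (∑ i, ∑ j, A i j ^ 2)

/-- Trace inner product `⟨A,B⟩ = tr(AᵀB)`. -/
def tip {m n : ℕ} (A B : Matrix (Fin m) (Fin n) ℝ) : ℝ := ∑ i, ∑ j, A i j * B i j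

/-- Spectral (operator) norm: largest singular value. -/
def opNorm {m n : ℕ} (A : Matrix (Fin m) (Fin n) ℝ) : ℝ :=
  sSup {t | ∃ x : Fin n → ℝ, _root_.enorm x ≤ 1 ∧ t = _root_.enorm (A.mulVec x)}

/-- Nuclear norm: `tr √(AᴴA)`, the sum of the singular values. -/
def nucNorm {m n : ℕ} (A : Matrix (Fin m) (Fin n) ℝ) : ℝ :=
  (let hA := Matrix.posSemidef_conjTranspose_mul_self A
   hA.1.eigenvectorUnitary.1 * Matrix.diagonal ((RCLike.ofReal : ℝ → ℝ) ∘ Real.sqrt ∘ hA.1.eigenvalues) *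
     (star hA.1.eigenvectorUnitary : Matrix (Fin n) (Fin n) ℝ)).trace

/-- The `j`-th largest singular value of a real matrix (`1`-indexed):
the list of square roots of eigenvalues of `AᴴA`, sorted in decreasing order. -/
def singVal {m n : ℕ} (A : Matrix (Fin m) (Fin n) ℝ) (j : ℕ) : ℝ :=
  (((List.ofFn ((Matrix.isHermitian_conjTranspose_mul_self A).eigenvalues)).map
      Real.sqrt).insertionSort (· ≥ ·)).getD (j - 1) 0

/-- A second-order critical point of `f`: zero gradient and positive-semidefinite
Hessian quadratic form. -/
def IsSecondOrderCriticalPoint {E : Type*} [NormedAddCommGroup E] [NormedSpace ℝ E]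
    (f : E → ℝ) (x : E) : Prop :=
  fderiv ℝ f x = 0 ∧ ∀ v : E, 0 ≤ fderiv ℝ (fun y => fderiv ℝ f y v) x v

/-- The gradient of `φ` at `M`, w.r.t. the trace inner product. -/
def gradM {m n : ℕ} (φ : Matrix (Fin m) (Fin n) ℝ → ℝ) (M : Matrix (Fin m) (Fin n) ℝ) :
    Matrix (Fin m) (Fin n) ℝ :=
  Matrix.of fun i j => fderiv ℝ φ M (Matrix.single i j 1)

/-- Hessian quadratic form `∇²φ(M)[E,E]`. -/
def hess {m n : ℕ} (φ : Matrix (Fin m) (Fin n) ℝ → ℝ) (M E : Matrix (Fin m) (Fin n) ℝ) : ℝ :=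
  fderiv ℝ (fun N => fderiv ℝ φ N E) M E

/-- Adjoint of a linear measurement map, w.r.t. the trace inner product. -/
def adj {m n p : ℕ} (A : Matrix (Fin m) (Fin n) ℝ →ₗ[ℝ] (Fin p → ℝ)) (ξ : Fin p → ℝ) :
    Matrix (Fin m) (Fin n) ℝ :=
  Matrix.of fun i j => ∑ k, ξ k * A (Matrix.single i j 1) k

/-- The subspace `S_d` of `d × d` real symmetric matrices. -/
def SymSpace (d : ℕ) : Submodule ℝ (Matrix (Fin d) (Fin d) ℝ) where
  carrier := {A | Aᵀ = A}
  add_mem' := by intro a b ha hb; simp only [Set.mem_setOf_eq, Matrix.transpose_add] at *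
                 rw [ha, hb]
  zero_mem' := by simp
  smul_mem' := by intro c A hA; simp only [Set.mem_setOf_eq, Matrix.transpose_smul] at *
                  rw [hA]

lemma mem_symSpace {d : ℕ} {A : Matrix (Fin d) (Fin d) ℝ} : A ∈ SymSpace d ↔ Aᵀ = A := Iff.rfl

lemma stdBasis_symm {d : ℕ} (i j : Fin d) :
    Matrix.single i j (1:ℝ) + Matrix.single j i 1 ∈ SymSpace d := by
  rw [mem_symSpace, Matrix.transpose_add]
  ext a b
  simp only [Matrix.add_apply, Matrix.transpose_apply, Matrix.single, Matrix.of_apply]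
  rw [add_comm]
  congr 1 <;> · congr 1; rw [eq_iff_iff, and_comm]

/-- The symmetrized elementary matrix `E_ij + E_ji` as an element of `S_d`. -/
def symBasis {d : ℕ} (i j : Fin d) : SymSpace d :=
  ⟨Matrix.single i j 1 + Matrix.single j i 1, stdBasis_symm i j⟩

lemma mmT_mem {d r : ℕ} (U : Matrix (Fin d) (Fin r) ℝ) : U * Uᵀ ∈ SymSpace d := by
  rw [mem_symSpace, Matrix.transpose_mul, Matrix.transpose_transpose]

/-- `U ↦ UUᵀ` as an element of `S_d`. -/
def mmT {d r : ℕ} (U : Matrix (Fin d) (Fin r) ℝ) : SymSpace d := ⟨U * Uᵀ, mmT_mem U⟩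

/-- The gradient of `φ : S_d → ℝ` at `M`, as the symmetric matrix representing the
derivative w.r.t. the trace inner product on `S_d`. -/
def gradS {d : ℕ} (φ : SymSpace d → ℝ) (M : SymSpace d) : Matrix (Fin d) (Fin d) ℝ :=
  Matrix.of fun i j => (1/2) * fderiv ℝ φ M (symBasis i j)

/-- Hessian quadratic form of `φ : S_d → ℝ`. -/
def hessS {d : ℕ} (φ : SymSpace d → ℝ) (M E : SymSpace d) : ℝ :=
  fderiv ℝ (fun N => fderiv ℝ φ N E) M E

/-- Adjoint of a linear map `𝒜 : S_d → ℝⁿ` w.r.t. the trace inner product on `S_d`. -/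
def adjS {d p : ℕ} (A : SymSpace d →ₗ[ℝ] (Fin p → ℝ)) (ξ : Fin p → ℝ) :
    Matrix (Fin d) (Fin d) ℝ :=
  Matrix.of fun i j => (1/2) * ∑ k, ξ k * A (symBasis i j) k

/-- `P` is the orthogonal projection matrix onto the column space of `U`:
it is symmetric, idempotent, and has the same range as `U`. -/
def IsOrthProjCol {d r : ℕ} (P : Matrix (Fin d) (Fin d) ℝ) (U : Matrix (Fin d) (Fin r) ℝ) :
    Prop :=
  Pᵀ = P ∧ P * P = P ∧ P * U = U ∧ ∃ W : Matrix (Fin r) (Fin d) ℝ, P = U * W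


instance matCLMNormedAddCommGroup {m n : ℕ} : NormedAddCommGroup (Matrix (Fin m) (Fin n) ℝ →L[ℝ] ℝ) :=
  ContinuousLinearMap.toNormedAddCommGroup

instance matCLMNormedSpace {m n : ℕ} : NormedSpace ℝ (Matrix (Fin m) (Fin n) ℝ →L[ℝ] ℝ) :=
  ContinuousLinearMap.toNormedSpace

lemma frob_sq {m n : ℕ} (X : Matrix (Fin m) (Fin n) ℝ) : frob X ^ 2 = tip X X := by
  rw [frob, Real.sq_sqrt (by positivity)]
  simp [tip, sq]

lemma frob_nonneg {m n : ℕ} (X : Matrix (Fin m) (Fin n) ℝ) : 0 ≤ frob X := Real.sqrt_nonneg _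

lemma frob_eq_zero {m n : ℕ} {X : Matrix (Fin m) (Fin n) ℝ} (h : frob X = 0) : X = 0 := by
  have h2 : tip X X = 0 := by rw [← frob_sq, h]; ring
  ext i j
  have hnn : ∀ i ∈ Finset.univ, (0:ℝ) ≤ ∑ j, X i j * X i j := by
    intro i _; exact Finset.sum_nonneg fun j _ => mul_self_nonneg _
  have := (Finset.sum_eq_zero_iff_of_nonneg hnn).mp h2 i (Finset.mem_univ i)
  have hnn2 : ∀ j ∈ Finset.univ, (0:ℝ) ≤ X i j * X i j := by intro j _; exact mul_self_nonneg _
  have := (Finset.sum_eq_zero_iff_of_nonneg hnn2).mp this j (Finset.mem_univ j)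
  have := mul_self_eq_zero.mp this
  simpa using this

lemma tip_expand {m n : ℕ} (a b : ℝ) (D E : Matrix (Fin m) (Fin n) ℝ) :
    tip (a•D + b•E) (a•D + b•E) = a^2 * tip D D + 2*a*b*tip D E + b^2 * tip E E := by
  have h : ∀ (i : Fin m) (j : Fin n), (a*D i j + b*E i j) * (a*D i j + b*E i j)
      = a^2*(D i j*D i j) + 2*a*b*(D i j*E i j) + b^2*(E i j*E i j) := by intros; ring
  simp only [tip, Matrix.add_apply, Matrix.smul_apply, smul_eq_mul, h,
    Finset.sum_add_distrib, Finset.mul_sum]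

lemma tip_sub_left {m n : ℕ} (X Y E : Matrix (Fin m) (Fin n) ℝ) :
    tip (X - Y) E = tip X E - tip Y E := by
  simp [tip, Matrix.sub_apply, sub_mul, Finset.sum_sub_distrib]

lemma tip_zero_left {m n : ℕ} (E : Matrix (Fin m) (Fin n) ℝ) : tip 0 E = 0 := by simp [tip]
lemma tip_zero_right {m n : ℕ} (E : Matrix (Fin m) (Fin n) ℝ) : tip E 0 = 0 := by simp [tip]
lemma frob_zero {m n : ℕ} : frob (0 : Matrix (Fin m) (Fin n) ℝ) = 0 := by simp [frob]

lemma tip_gradM {m n : ℕ} (φ : Matrix (Fin m) (Fin n) ℝ → ℝ) (M E : Matrix (Fin m) (Fin n) ℝ) :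
    tip (gradM φ M) E = fderiv ℝ φ M E := by
  have hstd : ∀ (i : Fin m) (j : Fin n),
      Matrix.single i j (E i j) = E i j • Matrix.single i j (1:ℝ) := by
    intro i j; rw [Matrix.smul_single, smul_eq_mul, mul_one]
  conv_rhs => rw [Matrix.matrix_eq_sum_single E]
  rw [map_sum]
  simp only [map_sum, hstd, ContinuousLinearMap.map_smul, smul_eq_mul]
  simp [tip, gradM, mul_comm]


/-- Lemma: key inequality for restricted strongly convex and smooth functions. -/
theorem key_gradient_inequality
    (d₁ d₂ k : ℕ) (hk : 1 ≤ k)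
    (φ : Matrix (Fin d₁) (Fin d₂) ℝ → ℝ) (hC2 : ContDiff ℝ 2 φ)
    (L μ : ℝ) (hμ0 : 0 ≤ μ) (hμL : μ ≤ L)
    (hH : ∀ M E : Matrix (Fin d₁) (Fin d₂) ℝ, M.rank ≤ k → E.rank ≤ k →
      μ * frob E ^ 2 ≤ hess φ M E ∧ hess φ M E ≤ L * frob E ^ 2)
    (M₁ M₂ E : Matrix (Fin d₁) (Fin d₂) ℝ)
    (hrank : ∀ a b c : ℝ, (a • M₁ + b • M₂ + c • E).rank ≤ k) :
    |tip (gradM φ M₂ - gradM φ M₁) E - (L + μ)/2 * tip (M₂ - M₁) E| ≤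
      (L - μ)/2 * frob (M₂ - M₁) * frob E := by
  have hf'c : ContDiff ℝ 1 (fderiv ℝ φ) := hC2.fderiv_right (m := 1) (by norm_num)
  have hf'd : Differentiable ℝ (fderiv ℝ φ) := hf'c.differentiable one_ne_zero
  have hφd : Differentiable ℝ φ := hC2.differentiable (by norm_num)
  have hEval : ∀ (Y M : Matrix (Fin d₁) (Fin d₂) ℝ), HasFDerivAt (fun N => fderiv ℝ φ N Y)
      ((ContinuousLinearMap.apply ℝ ℝ Y).comp (fderiv ℝ (fderiv ℝ φ) M)) M := fun Y M =>
    (ContinuousLinearMap.apply ℝ ℝ Y).hasFDerivAt.comp M (hf'd M).hasFDerivAt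
  have hBhess : ∀ M X : Matrix (Fin d₁) (Fin d₂) ℝ,
      hess φ M X = (fderiv ℝ (fderiv ℝ φ) M X) X := by
    intro M X
    rw [hess, (hEval X M).fderiv]
    rfl
  have hsymm : ∀ M X Y : Matrix (Fin d₁) (Fin d₂) ℝ,
      (fderiv ℝ (fderiv ℝ φ) M X) Y = (fderiv ℝ (fderiv ℝ φ) M Y) X :=
    fun M X Y =>
    second_derivative_symmetric (fun y => (hφd y).hasFDerivAt) (hf'd M).hasFDerivAt X Y
  set D := M₂ - M₁ with hDdef
  have hrk1 : ∀ t : ℝ, (M₁ + t • D).rank ≤ k := by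
    intro t
    have h := hrank (1 - t) t 0
    have he : (1-t) • M₁ + t • M₂ + (0:ℝ) • E = M₁ + t • D := by rw [hDdef]; module
    rwa [he] at h
  have hrk2 : ∀ a b : ℝ, (a • D + b • E).rank ≤ k := by
    intro a b
    have h := hrank (-a) a b
    have he : (-a) • M₁ + a • M₂ + b • E = a • D + b • E := by rw [hDdef]; module
    rwa [he] at h
  -- Polarization inequality at any rank ≤ k point
  have key : ∀ M : Matrix (Fin d₁) (Fin d₂) ℝ, M.rank ≤ k →
      |(fderiv ℝ (fderiv ℝ φ) M D) E - (L+μ)/2 * tip D E| ≤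
        (L-μ)/2 * frob D * frob E := by
    intro M hM
    by_cases hD0 : D = 0
    · rw [hD0]
      simp [tip_zero_left, frob_zero, map_zero]
    by_cases hE0 : E = 0
    · rw [hE0]
      simp only [map_zero, tip_zero_right, frob_zero, mul_zero, sub_zero, abs_zero]
      exact le_refl 0
    have ha : 0 < frob E := lt_of_le_of_ne (frob_nonneg E) fun h => hE0 (frob_eq_zero h.symm)
    have hb : 0 < frob D := lt_of_le_of_ne (frob_nonneg D) fun h => hD0 (frob_eq_zero h.symm)
    set a := frob E with haE
    set b := frob D with hbD
    set X := (fderiv ℝ (fderiv ℝ φ) M D) D with hX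
    set Y := (fderiv ℝ (fderiv ℝ φ) M D) E with hY
    set Z := (fderiv ℝ (fderiv ℝ φ) M E) E with hZ
    have Bexp : ∀ s u : ℝ, (fderiv ℝ (fderiv ℝ φ) M (s•D+u•E)) (s•D+u•E)
        = s^2 * X + 2*s*u * Y + u^2 * Z := by
      intro s u
      have h1 := hsymm M E D
      simp only [map_add, _root_.map_smul, ContinuousLinearMap.add_apply,
        ContinuousLinearMap.coe_smul', Pi.smul_apply, smul_eq_mul]
      rw [h1, ← hX, ← hY, ← hZ]
      ring
    have hq : tip E E = a^2 := by rw [haE, frob_sq]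
    have hp : tip D D = b^2 := by rw [hbD, frob_sq]
    have quad : ∀ s u : ℝ,
        μ * (s^2 * b^2 + 2*s*u*tip D E + u^2 * a^2) ≤ s^2*X + 2*s*u*Y + u^2*Z ∧
        s^2*X + 2*s*u*Y + u^2*Z ≤ L * (s^2 * b^2 + 2*s*u*tip D E + u^2 * a^2) := by
      intro s u
      have h := hH M (s•D + u•E) hM (hrk2 s u)
      rwa [hBhess, Bexp, frob_sq, tip_expand, hp, hq] at h
    obtain ⟨l1, u1⟩ := quad a b
    obtain ⟨l2, u2⟩ := quad a (-b)
    rw [abs_le]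
    have hab : 0 < a * b := mul_pos ha hb
    constructor
    · -- lower bound
      have h4 : 4*(a*b) * (-((L-μ)/2 * b * a)) ≤ 4*(a*b) * (Y - (L+μ)/2 * tip D E) := by
        nlinarith [l1, u2]
      have := (mul_le_mul_iff_right₀ (by positivity : (0:ℝ) < 4*(a*b))).mp h4
      linarith
    · have h4 : 4*(a*b) * (Y - (L+μ)/2 * tip D E) ≤ 4*(a*b) * ((L-μ)/2 * b * a) := by
        nlinarith [u1, l2]
      have := (mul_le_mul_iff_right₀ (by positivity : (0:ℝ) < 4*(a*b))).mp h4
      linarith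
  -- Mean value inequality along the segment
  have hcurve : ∀ t : ℝ, HasDerivAt (fun s : ℝ => M₁ + s • D) D t := by
    intro t
    have h := ((hasDerivAt_id t).smul_const D).const_add M₁
    rwa [one_smul] at h
  have hg : ∀ t : ℝ, HasDerivAt (fun s : ℝ => fderiv ℝ φ (M₁ + s • D) E)
      ((fderiv ℝ (fderiv ℝ φ) (M₁ + t • D) D) E) t := by
    intro t
    have h1 : HasDerivAt (fun s : ℝ => fderiv ℝ φ (M₁ + s • D))
        (fderiv ℝ (fderiv ℝ φ) (M₁ + t • D) D) t :=
      (hf'd _).hasFDerivAt.comp_hasDerivAt t (hcurve t)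
    exact (ContinuousLinearMap.apply ℝ ℝ E).hasFDerivAt.comp_hasDerivAt t h1
  have hgK : ∀ t : ℝ, HasDerivAt
      (fun s : ℝ => fderiv ℝ φ (M₁ + s • D) E - s * ((L+μ)/2 * tip D E))
      ((fderiv ℝ (fderiv ℝ φ) (M₁ + t • D) D) E - (L+μ)/2 * tip D E) t :=
    fun t => (hg t).sub (hasDerivAt_mul_const _)
  have hmvt := (convex_Icc (0:ℝ) 1).norm_image_sub_le_of_norm_hasDerivWithin_le
    (f := fun s : ℝ => fderiv ℝ φ (M₁ + s • D) E - s * ((L+μ)/2 * tip D E))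
    (f' := fun t : ℝ => (fderiv ℝ (fderiv ℝ φ) (M₁ + t • D) D) E - (L+μ)/2 * tip D E)
    (C := (L-μ)/2 * frob D * frob E)
    (fun t _ => (hgK t).hasDerivWithinAt)
    (fun t _ => by rw [Real.norm_eq_abs]; exact key (M₁ + t • D) (hrk1 t))
    (Set.left_mem_Icc.mpr zero_le_one) (Set.right_mem_Icc.mpr zero_le_one)
  have h1 : M₁ + (1:ℝ) • D = M₂ := by rw [hDdef]; module
  have h0 : M₁ + (0:ℝ) • D = M₁ := by module
  beta_reduce at hmvt
  rw [h1, h0] at hmvt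
  have harr : fderiv ℝ φ M₂ E - 1 * ((L+μ)/2 * tip D E) -
      (fderiv ℝ φ M₁ E - 0 * ((L+μ)/2 * tip D E)) =
      (fderiv ℝ φ M₂ E - fderiv ℝ φ M₁ E) - (L+μ)/2 * tip D E := by ring
  rw [harr, Real.norm_eq_abs] at hmvt
  rw [tip_sub_left, tip_gradM, tip_gradM]
  have hnrm : ‖(1:ℝ) - 0‖ = 1 := by norm_num
  rw [hnrm, mul_one] at hmvt
  exact hmvt

end
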